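/- Let a finite group G act on a non-unital commutative F-algebra J by algebra automorphisms, with |G| invertible in F, and let H ≤ G be any subgroup. Then (J^H)^{[G:H]} ⊆ J^H·J^G + J^G, i.e., any product of [G:H] elements of J^H lies in J^H·J^G + J^G. -/

import Mathlib

open scoped Pointwise

/-- If a finite group `G` acts on a non-unital commutative `F`-algebra `J` by
`F`-algebra automorphisms, with `|G|` invertible in `F`, and `H ≤ G` is any
subgroup, then any product of `[G:H]` elements of `J^H` lies in `J^H·J^G + J^G`
(the `F`-span of `J^H·J^G ∪ J^G`). -/
theorem stmt10 (F : Type*) [Field F] (G : Type*) [Group G] [Fintype G]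
    (J : Type*) [NonUnitalCommRing J] [Module F J]
    [SMulCommClass F J J] [IsScalarTower F J J]
    (ρ : G →* RingAut J) (hlin : ∀ (g : G) (c : F) (x : J), ρ g (c • x) = c • ρ g x)
    (H : Subgroup G)
    (hchar : (Fintype.card G : F) ≠ 0)
    (JH : Set J) (hJH : JH = {x : J | ∀ h ∈ H, ρ h x = x})
    (JG : Set J) (hJG : JG = {x : J | ∀ g : G, ρ g x = x})
    (a : J) (l : List J) (haH : a ∈ JH) (hlH : ∀ x ∈ l, x ∈ JH)
    (hlen : l.length + 1 = H.index) :
    l.foldl (· * ·) a ∈ Submodule.span F (JH * JG ∪ JG) := by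
  classical
  set n := l.length + 1 with hn
  set W : Submodule F J := Submodule.span F (JH * JG ∪ JG) with hW
  -- the factors
  set u : Fin n → J := (a :: l).get with hu_def
  have hu : ∀ i, u i ∈ JH := by
    intro i
    have hmem : u i ∈ a :: l := by
      have := List.get_mem (a :: l) ⟨i.1, i.2⟩
      simpa [hu_def] using this
    rcases List.mem_cons.mp hmem with h | h
    · exact h ▸ haH
    · exact hlH _ h
  have huH : ∀ (i : Fin n) (h : G), h ∈ H → ρ h (u i) = u i := by
    intro i h hh
    have := hu i
    rw [hJH] at this
    exact this h hh
  -- a transversal template: σ i ranges over all left cosets of H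
  obtain ⟨σ, hσ⟩ : ∃ σ : Fin n → G, ∀ g : G, ∃ i, g * σ i ∈ H := by
    have hcard : Nat.card (G ⧸ H) = n := by
      rw [← Subgroup.index_eq_card, ← hlen]
    refine ⟨fun i => ((Finite.equivFinOfCardEq hcard).symm i).out, ?_⟩
    intro g
    refine ⟨Finite.equivFinOfCardEq hcard ((g⁻¹ : G) : G ⧸ H), ?_⟩
    show g * ((Finite.equivFinOfCardEq hcard).symm
      (Finite.equivFinOfCardEq hcard ((g⁻¹ : G) : G ⧸ H))).out ∈ H
    rw [Equiv.symm_apply_apply]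
    have h1 : ((((g⁻¹ : G) : G ⧸ H)).out : G ⧸ H) = ((g⁻¹ : G) : G ⧸ H) :=
      QuotientGroup.out_eq' _
    have h2 : (((g⁻¹ : G) : G ⧸ H)).out⁻¹ * g⁻¹ ∈ H := QuotientGroup.eq.mp h1
    have h3 : (g * (((g⁻¹ : G) : G ⧸ H)).out)⁻¹ ∈ H := by
      rwa [mul_inv_rev]
    exact (inv_mem_iff).mp h3
  -- the action of G on the unitization by algebra homomorphisms
  let ρₐ : G → (J →ₙₐ[F] J) := fun g =>
    { toFun := ρ g
      map_smul' := hlin g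
      map_zero' := map_zero (ρ g)
      map_add' := map_add (ρ g)
      map_mul' := map_mul (ρ g) }
  let ψ : G → (Unitization F J →ₐ[F] Unitization F J) := fun g =>
    ((Unitization.inrNonUnitalAlgHom F J).comp (ρₐ g)).toAlgHom
  have hψ_apply : ∀ (g : G) (x : Unitization F J),
      ψ g x = Unitization.inl x.fst + Unitization.inr (ρ g x.snd) := by
    intro g x
    show algebraMap F (Unitization F J) x.fst
      + ((Unitization.inrNonUnitalAlgHom F J).comp (ρₐ g)) x.snd
      = Unitization.inl x.fst + Unitization.inr (ρ g x.snd)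
    rw [Unitization.algebraMap_eq_inl]
    rfl
  have hψ_snd : ∀ (g : G) (x : Unitization F J), (ψ g x).snd = ρ g x.snd := by
    intro g x
    rw [hψ_apply]
    simp [Unitization.snd_add, Unitization.snd_inl, Unitization.snd_inr]
  have hψ_inr : ∀ (g : G) (x : J),
      ψ g (Unitization.inr x) = Unitization.inr (ρ g x) := by
    intro g x
    rw [hψ_apply]
    simp [Unitization.fst_inr, Unitization.snd_inr]
  -- the key vanishing identity
  have hvanish : ∀ g : G,
      (∏ i : Fin n, ((Unitization.inr (u i) : Unitization F J)
        + (- Unitization.inr (ρ (g * σ i) (u i))))) = 0 := by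
    intro g
    obtain ⟨i₀, hi₀⟩ := hσ g
    refine Finset.prod_eq_zero (Finset.mem_univ i₀) ?_
    rw [huH i₀ _ hi₀]
    simp
  -- expand the product
  have hexpand : ∀ g : G,
      (0 : Unitization F J) = ∑ t ∈ (Finset.univ : Finset (Fin n)).powerset,
        (∏ i ∈ t, (Unitization.inr (u i) : Unitization F J)) *
          ∏ i ∈ (Finset.univ : Finset (Fin n)) \ t,
            (- Unitization.inr (ρ (g * σ i) (u i))) := by
    intro g
    rw [← Finset.prod_add]
    exact (hvanish g).symm
  -- sum over g and swap the sums
  have hsum : (0 : Unitization F J) = ∑ t ∈ (Finset.univ : Finset (Fin n)).powerset,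
      (∏ i ∈ t, (Unitization.inr (u i) : Unitization F J)) *
        ∑ g : G, ∏ i ∈ (Finset.univ : Finset (Fin n)) \ t,
          (- Unitization.inr (ρ (g * σ i) (u i))) := by
    calc (0 : Unitization F J) = ∑ _g : G, (0 : Unitization F J) := by simp
      _ = ∑ g : G, ∑ t ∈ (Finset.univ : Finset (Fin n)).powerset,
            (∏ i ∈ t, (Unitization.inr (u i) : Unitization F J)) *
              ∏ i ∈ (Finset.univ : Finset (Fin n)) \ t,
                (- Unitization.inr (ρ (g * σ i) (u i))) :=
          Finset.sum_congr rfl (fun g _ => hexpand g)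
      _ = ∑ t ∈ (Finset.univ : Finset (Fin n)).powerset, ∑ g : G,
            (∏ i ∈ t, (Unitization.inr (u i) : Unitization F J)) *
              ∏ i ∈ (Finset.univ : Finset (Fin n)) \ t,
                (- Unitization.inr (ρ (g * σ i) (u i))) := Finset.sum_comm
      _ = _ := Finset.sum_congr rfl (fun t _ => (Finset.mul_sum _ _ _).symm)
  -- notation for the inner invariant sums and the summands
  set Y : Finset (Fin n) → Unitization F J := fun t =>
    ∑ g : G, ∏ i ∈ (Finset.univ : Finset (Fin n)) \ t,
      (- Unitization.inr (ρ (g * σ i) (u i))) with hY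
  set T : Finset (Fin n) → Unitization F J := fun t =>
    (∏ i ∈ t, (Unitization.inr (u i) : Unitization F J)) * Y t with hT
  -- the `t = univ` term equals |G| • ∏ᵢ inr (u i)
  have huniv_term : T Finset.univ
      = (Fintype.card G) • ∏ i : Fin n, (Unitization.inr (u i) : Unitization F J) := by
    rw [hT]
    show (∏ i ∈ (Finset.univ : Finset (Fin n)),
      (Unitization.inr (u i) : Unitization F J)) * Y Finset.univ = _
    rw [hY]
    show (∏ i ∈ (Finset.univ : Finset (Fin n)),
        (Unitization.inr (u i) : Unitization F J)) *
      ∑ _g : G, ∏ i ∈ (Finset.univ : Finset (Fin n)) \ Finset.univ,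
        (- Unitization.inr (ρ (_g * σ i) (u i))) = _
    simp only [Finset.sdiff_self, Finset.prod_empty]
    rw [Finset.sum_const, Finset.card_univ, mul_smul_comm, mul_one]
  -- isolate the `t = univ` term
  have hsplit : (0 : Unitization F J)
      = (Fintype.card G) • (∏ i : Fin n, (Unitization.inr (u i) : Unitization F J))
      + ∑ t ∈ ((Finset.univ : Finset (Fin n)).powerset).erase Finset.univ, T t := by
    calc (0 : Unitization F J)
        = ∑ t ∈ (Finset.univ : Finset (Fin n)).powerset, T t := hsum
      _ = T Finset.univ
          + ∑ t ∈ ((Finset.univ : Finset (Fin n)).powerset).erase Finset.univ, T t :=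
        (Finset.add_sum_erase _ T (Finset.mem_powerset_self _)).symm
      _ = _ := by rw [huniv_term]
  -- each remaining term is `inr` of an element of the span
  have hterm : ∀ t ∈ ((Finset.univ : Finset (Fin n)).powerset).erase Finset.univ,
      ∃ z : J, z ∈ W ∧ T t = Unitization.inr z := by
    intro t ht
    rw [Finset.mem_erase, Finset.mem_powerset] at ht
    obtain ⟨htne, -⟩ := ht
    have htc : ((Finset.univ : Finset (Fin n)) \ t).Nonempty := by
      rw [Finset.sdiff_nonempty]
      intro hc
      exact htne (Finset.eq_univ_iff_forall.mpr (fun i => hc (Finset.mem_univ i)))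
    -- fst of Y t is zero
    have hYfst : (Y t).fst = 0 := by
      have hterm0 : ∀ g : G, (∏ i ∈ (Finset.univ : Finset (Fin n)) \ t,
          (- Unitization.inr (ρ (g * σ i) (u i)) : Unitization F J)).fst = 0 := by
        intro g
        obtain ⟨i₀, hi₀⟩ := htc
        have hmp : (Unitization.fstHom F J) (∏ i ∈ (Finset.univ : Finset (Fin n)) \ t,
            (- Unitization.inr (ρ (g * σ i) (u i)) : Unitization F J))
            = ∏ i ∈ (Finset.univ : Finset (Fin n)) \ t,
              (Unitization.fstHom F J) (- Unitization.inr (ρ (g * σ i) (u i)) : Unitization F J) :=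
          map_prod _ _ _
        have h0 : (Unitization.fstHom F J) (∏ i ∈ (Finset.univ : Finset (Fin n)) \ t,
            (- Unitization.inr (ρ (g * σ i) (u i)) : Unitization F J)) = 0 := by
          rw [hmp]
          refine Finset.prod_eq_zero hi₀ ?_
          show ((- Unitization.inr (ρ (g * σ i₀) (u i₀)) : Unitization F J)).fst = 0
          rw [Unitization.fst_neg, Unitization.fst_inr, neg_zero]
        exact h0
      have hfs : (Y t).fst = ∑ g : G, (∏ i ∈ (Finset.univ : Finset (Fin n)) \ t,
          (- Unitization.inr (ρ (g * σ i) (u i)) : Unitization F J)).fst := by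
        rw [hY]
        exact map_sum (Unitization.fstHom F J) _ _
      rw [hfs]
      exact Finset.sum_eq_zero (fun g _ => hterm0 g)
    have hYinr : Y t = Unitization.inr ((Y t).snd) := by
      conv_lhs => rw [← Unitization.inl_fst_add_inr_snd_eq (Y t)]
      rw [hYfst]
      simp
    -- snd of Y t is G-invariant
    have hYG : (Y t).snd ∈ JG := by
      rw [hJG]
      intro g'
      have hψY : ψ g' (Y t) = Y t := by
        rw [hY]
        show ψ g' (∑ g : G, ∏ i ∈ (Finset.univ : Finset (Fin n)) \ t,
          (- Unitization.inr (ρ (g * σ i) (u i)))) = _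
        rw [map_sum]
        have htm : ∀ g : G, ψ g' (∏ i ∈ (Finset.univ : Finset (Fin n)) \ t,
            (- Unitization.inr (ρ (g * σ i) (u i)) : Unitization F J))
            = ∏ i ∈ (Finset.univ : Finset (Fin n)) \ t,
              (- Unitization.inr (ρ ((g' * g) * σ i) (u i)) : Unitization F J) := by
          intro g
          rw [map_prod]
          refine Finset.prod_congr rfl ?_
          intro i _
          have hcomp : ρ ((g' * g) * σ i) (u i) = ρ g' (ρ (g * σ i) (u i)) := by
            rw [mul_assoc, map_mul]
            rfl
          rw [map_neg, hψ_inr, hcomp]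
        rw [Finset.sum_congr rfl (fun g _ => htm g)]
        exact Fintype.sum_bijective (fun g => g' * g) (Group.mulLeft_bijective g') _ _
          (fun g => rfl)
      calc ρ g' (Y t).snd = (ψ g' (Y t)).snd := (hψ_snd g' (Y t)).symm
        _ = (Y t).snd := by rw [hψY]
    -- now split on whether t is empty
    rcases Finset.eq_empty_or_nonempty t with hte | htne'
    · subst hte
      refine ⟨(Y ∅).snd, Submodule.subset_span (Or.inr hYG), ?_⟩
      rw [hT]
      show (∏ i ∈ (∅ : Finset (Fin n)), (Unitization.inr (u i) : Unitization F J)) * Y ∅ = _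
      simp only [Finset.prod_empty, one_mul]
      exact hYinr
    · -- the partial product over t
      have hXfst : (∏ i ∈ t, (Unitization.inr (u i) : Unitization F J)).fst = 0 := by
        obtain ⟨i₀, hi₀⟩ := htne'
        have h0 : (Unitization.fstHom F J)
            (∏ i ∈ t, (Unitization.inr (u i) : Unitization F J)) = 0 := by
          rw [map_prod]
          refine Finset.prod_eq_zero hi₀ ?_
          show ((Unitization.inr (u i₀) : Unitization F J)).fst = 0
          rw [Unitization.fst_inr]
        exact h0
      have hXinr : (∏ i ∈ t, (Unitization.inr (u i) : Unitization F J))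
          = Unitization.inr ((∏ i ∈ t, (Unitization.inr (u i) : Unitization F J)).snd) := by
        conv_lhs => rw [← Unitization.inl_fst_add_inr_snd_eq
          (∏ i ∈ t, (Unitization.inr (u i) : Unitization F J))]
        rw [hXfst]
        simp
      have hXH : (∏ i ∈ t, (Unitization.inr (u i) : Unitization F J)).snd ∈ JH := by
        rw [hJH]
        intro h hh
        have hψX : ψ h (∏ i ∈ t, (Unitization.inr (u i) : Unitization F J))
            = ∏ i ∈ t, (Unitization.inr (u i) : Unitization F J) := by
          rw [map_prod]
          refine Finset.prod_congr rfl ?_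
          intro i _
          rw [hψ_inr, huH i h hh]
        calc ρ h (∏ i ∈ t, (Unitization.inr (u i) : Unitization F J)).snd
            = (ψ h (∏ i ∈ t, (Unitization.inr (u i) : Unitization F J))).snd :=
              (hψ_snd h _).symm
          _ = (∏ i ∈ t, (Unitization.inr (u i) : Unitization F J)).snd := by rw [hψX]
      refine ⟨(∏ i ∈ t, (Unitization.inr (u i) : Unitization F J)).snd * (Y t).snd,
        Submodule.subset_span (Or.inl (Set.mul_mem_mul hXH hYG)), ?_⟩
      rw [hT]
      show (∏ i ∈ t, (Unitization.inr (u i) : Unitization F J)) * Y t = _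
      rw [Unitization.inr_mul, ← hXinr, ← hYinr]
  -- assemble
  choose z hzW hzEq using hterm
  have hzsum : ∑ t ∈ ((Finset.univ : Finset (Fin n)).powerset).erase Finset.univ, T t
      = Unitization.inr (∑ t ∈ (((Finset.univ : Finset (Fin n)).powerset).erase
          Finset.univ).attach, z t.1 t.2) := by
    rw [← Finset.sum_attach (((Finset.univ : Finset (Fin n)).powerset).erase Finset.univ) T]
    rw [Finset.sum_congr rfl (fun t _ => hzEq t.1 t.2)]
    exact (map_sum (Unitization.inrNonUnitalAlgHom F J) _ _).symm
  -- the foldl product as a Finset product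
  have hfold : ∀ (L : List J) (x : J),
      (Unitization.inr (L.foldl (· * ·) x) : Unitization F J) = Unitization.inr x * (L.map
        (fun y => (Unitization.inr y : Unitization F J))).prod := by
    intro L
    induction L with
    | nil => intro x; simp
    | cons b T' ih =>
      intro x
      simp only [List.foldl_cons, List.map_cons, List.prod_cons]
      rw [ih (x * b), Unitization.inr_mul, mul_assoc]
  have hprod_eq : (Unitization.inr (l.foldl (· * ·) a) : Unitization F J)
      = ∏ i : Fin n, (Unitization.inr (u i) : Unitization F J) := by
    rw [hfold l a]
    have h1 : (∏ i : Fin n, (Unitization.inr (u i) : Unitization F J))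
        = (List.ofFn (fun i : Fin n => (Unitization.inr (u i) : Unitization F J))).prod :=
      List.prod_ofFn.symm
    have h2 : (List.ofFn (fun i : Fin n => (Unitization.inr (u i) : Unitization F J)))
        = (List.ofFn u).map (fun y => (Unitization.inr y : Unitization F J)) :=
      (List.map_ofFn (f := u) (g := fun y => (Unitization.inr y : Unitization F J))).symm
    have h3 : List.ofFn u = a :: l := List.ofFn_get (a :: l)
    rw [h1, h2, h3]
    simp only [List.map_cons, List.prod_cons]
  -- conclude
  have hkey : (Fintype.card G) • (∏ i : Fin n, (Unitization.inr (u i) : Unitization F J))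
      = Unitization.inr (- ∑ t ∈ (((Finset.univ : Finset (Fin n)).powerset).erase
          Finset.univ).attach, z t.1 t.2) := by
    have h4 : (Fintype.card G) • (∏ i : Fin n, (Unitization.inr (u i) : Unitization F J))
        = - ∑ t ∈ ((Finset.univ : Finset (Fin n)).powerset).erase Finset.univ, T t :=
      eq_neg_of_add_eq_zero_left hsplit.symm
    rw [h4, hzsum, Unitization.inr_neg]
  have h5 : (Unitization.inr ((Fintype.card G) • (l.foldl (· * ·) a)) : Unitization F J)
      = Unitization.inr (- ∑ t ∈ (((Finset.univ : Finset (Fin n)).powerset).erase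
          Finset.univ).attach, z t.1 t.2) := by
    rw [Unitization.inr_smul, hprod_eq]
    exact hkey
  have h6 := Unitization.inr_injective h5
  have hmem : (Fintype.card G) • (l.foldl (· * ·) a) ∈ W := by
    rw [h6]
    refine neg_mem (Submodule.sum_mem _ ?_)
    intro t _
    exact hzW t.1 t.2
  have h7 : ((Fintype.card G : F)) • (l.foldl (· * ·) a) ∈ W := by
    rwa [Nat.cast_smul_eq_nsmul]
  have h8 := Submodule.smul_mem W ((Fintype.card G : F))⁻¹ h7
  rwa [inv_smul_smul₀ hchar] at h8
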